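/- Let d ≥ 1 and Φ ≥ 1 be integers. Let F ⊆ ℝ^d be a nonempty set such that for every invertible matrix V̄ ∈ ℤ^{d×d} with all entries of absolute value at most Φ and every index i ∈ {1, …, d}, the sign (negative, zero, or positive) of the i-th coordinate of V̄^{-1}x is the same for all x ∈ F. Let P ⊆ box(d, Φ) be a finite set with F ⊆ cone(P). Then there exists a linearly independent subset V ⊆ P with F ⊆ cone(V). -/

import Mathlib

def coneZ {d : ℕ} (P : Finset (Fin d → ℤ)) : Set (Fin d → ℝ) :=
  {x | ∃ lam : (Fin d → ℤ) → ℝ, (∀ v, 0 ≤ lam v) ∧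
    x = ∑ v ∈ P, lam v • fun j => ((v j : ℤ) : ℝ)}

lemma coneZ_caratheodory {d : ℕ} (P : Finset (Fin d → ℤ)) (x : Fin d → ℝ)
    (hx : x ∈ coneZ P) :
    ∃ T ⊆ P, LinearIndependent ℝ (fun v : T => fun j => ((v.1 j : ℤ) : ℝ)) ∧
      x ∈ coneZ T := by
  classical
  induction P using Finset.strongInduction with
  | _ P ih =>
    by_cases hli : LinearIndependent ℝ (fun v : P => fun j => ((v.1 j : ℤ) : ℝ))
    · exact ⟨P, Finset.Subset.refl P, hli, hx⟩
    · obtain ⟨g, hgsum, i0, hgi0⟩ := Fintype.not_linearIndependent_iff.mp hli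
      obtain ⟨lam, hlam0, hlamx⟩ := hx
      set ι : (Fin d → ℤ) → (Fin d → ℝ) := fun v j => ((v j : ℤ) : ℝ) with hι
      -- choose sign so that some coefficient is positive
      obtain ⟨gg, hggsum, v0', hv0'P, hv0'pos⟩ :
          ∃ gg : (Fin d → ℤ) → ℝ, (∑ v ∈ P, gg v • ι v) = 0 ∧ ∃ v0 ∈ P, 0 < gg v0 := by
        set g1 : (Fin d → ℤ) → ℝ := fun v => if h : v ∈ P then g ⟨v, h⟩ else 0 with hg1
        have hsum1 : (∑ v ∈ P, g1 v • ι v) = 0 := by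
          rw [← Finset.sum_attach P (fun v => g1 v • ι v)]
          rw [← hgsum]
          apply Finset.sum_congr rfl
          intro v _
          simp [hg1, v.2]
          rfl
        by_cases hpos : ∃ v0 ∈ P, 0 < g1 v0
        · exact ⟨g1, hsum1, hpos⟩
        · refine ⟨fun v => -g1 v, ?_, i0.1, i0.2, ?_⟩
          · simp only [neg_smul, Finset.sum_neg_distrib, hsum1, neg_zero]
          · push_neg at hpos
            have h1 : g1 i0.1 ≠ 0 := by simp [hg1, i0.2, hgi0]
            have h2 := hpos i0.1 i0.2
            have : g1 i0.1 < 0 := lt_of_le_of_ne h2 h1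
            show 0 < -g1 i0.1
            linarith
      -- the set of positive coefficients
      set S := P.filter (fun v => 0 < gg v) with hS
      have hSne : S.Nonempty := ⟨v0', Finset.mem_filter.mpr ⟨hv0'P, hv0'pos⟩⟩
      obtain ⟨v0, hv0S, hv0min⟩ := S.exists_min_image (fun v => lam v / gg v) hSne
      have hv0P : v0 ∈ P := (Finset.mem_filter.mp hv0S).1
      have hv0pos : 0 < gg v0 := (Finset.mem_filter.mp hv0S).2
      set t := lam v0 / gg v0 with ht
      have ht0 : 0 ≤ t := div_nonneg (hlam0 v0) hv0pos.le
      set lam' : (Fin d → ℤ) → ℝ := fun v => lam v - t * gg v with hlam'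
      have hlam'0 : ∀ v ∈ P, 0 ≤ lam' v := by
        intro v hv
        by_cases hgv : 0 < gg v
        · have hvS : v ∈ S := Finset.mem_filter.mpr ⟨hv, hgv⟩
          have := hv0min v hvS
          have : t * gg v ≤ lam v := by
            rw [ht]
            calc lam v0 / gg v0 * gg v ≤ lam v / gg v * gg v := by
                  apply mul_le_mul_of_nonneg_right this hgv.le
              _ = lam v := div_mul_cancel₀ _ hgv.ne'
          simp only [hlam']; linarith
        · push_neg at hgv
          have : t * gg v ≤ 0 := mul_nonpos_of_nonneg_of_nonpos ht0 hgv
          have := hlam0 v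
          simp only [hlam']; linarith
      have hlam'v0 : lam' v0 = 0 := by
        simp only [hlam', ht]
        field_simp
        ring
      have hsum' : x = ∑ v ∈ P, lam' v • ι v := by
        simp only [hlam', sub_smul, smul_smul, Finset.sum_sub_distrib]
        have : ∑ v ∈ P, (t * gg v) • ι v = t • ∑ v ∈ P, gg v • ι v := by
          rw [Finset.smul_sum]
          apply Finset.sum_congr rfl
          intro v _
          rw [smul_smul]
        rw [this, hggsum, smul_zero, sub_zero, hlamx]
      -- x in cone over P.erase v0
      have hxer : x ∈ coneZ (P.erase v0) := by
        refine ⟨fun v => if v ∈ P.erase v0 then lam' v else 0, ?_, ?_⟩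
        · intro v
          by_cases h : v ∈ P.erase v0
          · simp only [h, if_true]
            exact hlam'0 v (Finset.mem_of_mem_erase h)
          · simp [h]
        · rw [hsum']
          rw [← Finset.add_sum_erase P _ hv0P]
          rw [hlam'v0, zero_smul, zero_add]
          apply Finset.sum_congr rfl
          intro v hv
          simp [hv]
          rfl
      obtain ⟨T, hT1, hT2, hT3⟩ := ih (P.erase v0) (Finset.erase_ssubset hv0P) hxer
      exact ⟨T, hT1.trans (Finset.erase_subset _ _), hT2, hT3⟩


lemma sign_aux {a b : ℝ} (h : SignType.sign a = SignType.sign b) (hb : 0 ≤ b) :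
    0 ≤ a ∧ (b = 0 → a = 0) := by
  rcases eq_or_lt_of_le hb with hb0 | hb0
  · have : SignType.sign a = 0 := by rw [h, ← hb0, sign_zero]
    have ha : a = 0 := sign_eq_zero_iff.mp this
    exact ⟨le_of_eq ha.symm, fun _ => ha⟩
  · have : SignType.sign a = 1 := by rw [h, sign_pos hb0]
    have ha : 0 < a := sign_eq_one_iff.mp this
    exact ⟨ha.le, fun hb' => absurd hb' hb0.ne'⟩

theorem linearly_independent_generators
    (d Φ : ℕ) (hd : 1 ≤ d) (hΦ : 1 ≤ Φ)
    (F : Set (Fin d → ℝ)) (hne : F.Nonempty)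
    (hsign : ∀ Vbar : Matrix (Fin d) (Fin d) ℤ, Vbar.det ≠ 0 →
      (∀ i j, |Vbar i j| ≤ (Φ : ℤ)) →
      ∀ i : Fin d, ∃ s : SignType, ∀ x ∈ F,
        SignType.sign (((Vbar.map (Int.cast : ℤ → ℝ))⁻¹).mulVec x i) = s)
    (P : Finset (Fin d → ℤ)) (hP : ∀ p ∈ P, ∀ j, |p j| ≤ (Φ : ℤ))
    (hFP : F ⊆ coneZ P) :
    ∃ V ⊆ P, LinearIndependent ℝ (fun v : V => fun j => ((v.1 j : ℤ) : ℝ)) ∧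
      F ⊆ coneZ V := by
  classical
  set ι : (Fin d → ℤ) → (Fin d → ℝ) := fun v j => ((v j : ℤ) : ℝ) with hιdef
  have hιinj : Function.Injective ι := by
    intro a b hab
    funext j
    have : ((a j : ℤ) : ℝ) = ((b j : ℤ) : ℝ) := congrFun hab j
    exact_mod_cast this
  obtain ⟨x0, hx0F⟩ := hne
  obtain ⟨T, hTP, hTli, lam, hlam0, hx0eq⟩ := coneZ_caratheodory P x0 (hFP hx0F)
  refine ⟨T, hTP, hTli, ?_⟩
  -- the image of T under ι is a linearly independent set
  have hrange : Set.range (fun v : T => fun j => ((v.1 j : ℤ) : ℝ)) = ι '' ↑T := by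
    ext y; constructor
    · rintro ⟨v, rfl⟩; exact ⟨v.1, v.2, rfl⟩
    · rintro ⟨w, hw, rfl⟩; exact ⟨⟨w, hw⟩, rfl⟩
  have hsli : LinearIndependent ℝ ((↑) : (ι '' ↑T) → (Fin d → ℝ)) := by
    rw [← hrange]; exact hTli.linearIndepOn_id
  -- extend to a basis within small integer vectors
  set tset : Set (Fin d → ℝ) := (ι '' ↑T) ∪ Set.range (fun i : Fin d => (Pi.single i (1:ℝ) : Fin d → ℝ)) with htset
  have htsp : Submodule.span ℝ tset = ⊤ := by
    rw [eq_top_iff]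
    intro x _
    have hx : x = ∑ i : Fin d, x i • (Pi.single i (1:ℝ) : Fin d → ℝ) := by
      funext j
      rw [Finset.sum_apply]
      simp [Pi.single_apply]
    rw [hx]
    exact Submodule.sum_mem _ fun i _ => Submodule.smul_mem _ _
      (Submodule.subset_span (Or.inr ⟨i, rfl⟩))
  obtain ⟨b, hbt, hsb, htspanb, hbli⟩ :=
    exists_linearIndepOn_id_extension hsli Set.subset_union_left
  replace hbli : LinearIndependent ℝ ((↑) : b → (Fin d → ℝ)) := hbli
  have hbsp : Submodule.span ℝ b = ⊤ := by
    rw [eq_top_iff, ← htsp]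
    exact Submodule.span_le.mpr htspanb
  have hbfin : b.Finite := hbli.setFinite
  haveI : Fintype b := hbfin.fintype
  let B0 : Module.Basis b ℝ (Fin d → ℝ) := Module.Basis.mk hbli (by rw [Subtype.range_coe]; exact hbsp.ge)
  have hcard : Fintype.card b = d := by
    have h1 := Module.finrank_eq_card_basis B0
    rw [Module.finrank_fin_fun] at h1
    exact h1.symm
  let e : Fin d ≃ b := Fintype.equivOfCardEq (by simp [hcard])
  let B : Module.Basis (Fin d) ℝ (Fin d → ℝ) := B0.reindex e.symm
  have hBk : ∀ k : Fin d, B k = (e k : Fin d → ℝ) := by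
    intro k
    simp [B, Module.Basis.reindex_apply, B0, Module.Basis.mk_apply]
  -- choose integer preimages
  have hW : ∀ y : b, ∃ w : Fin d → ℤ, ι w = (y : Fin d → ℝ) ∧ ∀ j, |w j| ≤ (Φ : ℤ) := by
    rintro ⟨y, hy⟩
    rcases hbt hy with hy1 | hy2
    · obtain ⟨w, hwT, hwy⟩ := hy1
      exact ⟨w, hwy, hP w (hTP hwT) ⟩
    · obtain ⟨i, rfl⟩ := hy2
      refine ⟨Pi.single i 1, ?_, ?_⟩
      · funext j
        simp [hιdef, Pi.single_apply, apply_ite]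
      · intro j
        simp only [Pi.single_apply]
        split <;> simp <;> exact_mod_cast hΦ
  let W : b → (Fin d → ℤ) := fun y => (hW y).choose
  have hWι : ∀ y : b, ι (W y) = (y : Fin d → ℝ) := fun y => (hW y).choose_spec.1
  have hWbd : ∀ y : b, ∀ j, |W y j| ≤ (Φ : ℤ) := fun y => (hW y).choose_spec.2
  -- the matrix
  let Vbar : Matrix (Fin d) (Fin d) ℤ := Matrix.of fun i k => W (e k) i
  let M : Matrix (Fin d) (Fin d) ℝ := Vbar.map (Int.cast : ℤ → ℝ)
  have hMk : ∀ k i, M i k = B k i := by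
    intro k i
    have h1 : M i k = ι (W (e k)) i := rfl
    rw [h1, hWι, hBk]
  have hMeq : M = (Pi.basisFun ℝ (Fin d)).toMatrix B := by
    ext i j
    rw [Module.Basis.toMatrix_apply, Pi.basisFun_repr]
    exact hMk j i
  have hMunit : IsUnit M.det := by
    rw [hMeq]
    haveI := (Pi.basisFun ℝ (Fin d)).invertibleToMatrix B
    exact Matrix.isUnit_det_of_invertible _
  have hdetZ : Vbar.det ≠ 0 := by
    intro h
    have h2 : M.det = ((Vbar.det : ℤ) : ℝ) := by
      rw [show M = (Int.castRingHom ℝ).mapMatrix Vbar from rfl, ← RingHom.map_det]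
      rfl
    rw [h] at h2
    simp at h2
    exact (hMunit.ne_zero) h2
  have hbound : ∀ i k, |Vbar i k| ≤ (Φ : ℤ) := fun i k => hWbd (e k) i
  -- inverse facts
  have hinv1 : ∀ c : Fin d → ℝ, M⁻¹.mulVec (M.mulVec c) = c := by
    intro c
    rw [Matrix.mulVec_mulVec, Matrix.nonsing_inv_mul M hMunit, Matrix.one_mulVec]
  have hinv2 : ∀ y : Fin d → ℝ, M.mulVec (M⁻¹.mulVec y) = y := by
    intro y
    rw [Matrix.mulVec_mulVec, Matrix.mul_nonsing_inv M hMunit, Matrix.one_mulVec]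
  have hMsum : ∀ c : Fin d → ℝ, M.mulVec c = ∑ k, c k • B k := by
    intro c
    funext i
    rw [Finset.sum_apply]
    simp only [Matrix.mulVec, dotProduct, Pi.smul_apply, smul_eq_mul]
    exact Finset.sum_congr rfl fun k _ => by rw [hMk k i, mul_comm]
  -- the map from T into Fin d
  have hwb : ∀ w ∈ T, ι w ∈ b := fun w hw => hsb ⟨w, hw, rfl⟩
  let φ : ∀ w ∈ T, Fin d := fun w hw => e.symm ⟨ι w, hwb w hw⟩
  have hφ1 : ∀ w hw, W (e (φ w hw)) = w := by
    intro w hw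
    apply hιinj
    rw [hWι]
    simp [φ]
  have hφ2 : ∀ w hw, B (φ w hw) = ι w := by
    intro w hw
    rw [hBk]
    simp [φ]
  have hφ3 : ∀ k (h : W (e k) ∈ T), φ (W (e k)) h = k := by
    intro k h
    simp only [φ]
    rw [Equiv.symm_apply_eq]
    exact Subtype.ext (hWι (e k))
  set K : Finset (Fin d) := Finset.univ.filter (fun k => W (e k) ∈ T) with hK
  -- representation of x0
  set c0 : Fin d → ℝ := fun k => if W (e k) ∈ T then lam (W (e k)) else 0 with hc0
  have hc0nonneg : ∀ k, 0 ≤ c0 k := by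
    intro k
    simp only [hc0]
    split
    · exact hlam0 _
    · exact le_refl 0
  have hsumKT : ∀ r : Fin d → ℝ,
      ∑ k ∈ K, r k • B k = ∑ w ∈ T, (if hw : w ∈ T then r (φ w hw) else 0) • ι w := by
    intro r
    refine Finset.sum_bij' (fun k hk => W (e k)) (fun w hw => φ w hw) ?_ ?_ ?_ ?_ ?_
    · intro k hk
      exact (Finset.mem_filter.mp hk).2
    · intro w hw
      rw [hK, Finset.mem_filter]
      exact ⟨Finset.mem_univ _, by rw [hφ1 w hw]; exact hw⟩
    · intro k hk
      exact hφ3 k (Finset.mem_filter.mp hk).2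
    · intro w hw
      exact hφ1 w hw
    · intro k hk
      have hkT := (Finset.mem_filter.mp hk).2
      rw [dif_pos hkT, hφ3 k hkT]
      congr 1
      rw [hBk, hWι]
  have hMc0 : M.mulVec c0 = x0 := by
    rw [hMsum, hx0eq]
    have h1 : ∑ k, c0 k • B k = ∑ k ∈ K, c0 k • B k := by
      symm
      apply Finset.sum_filter_of_ne
      intro k _ hne'
      by_contra hk
      apply hne'
      rw [hc0]
      simp only [hk, if_false, zero_smul]
    rw [h1, hsumKT c0]
    apply Finset.sum_congr rfl
    intro w hw
    rw [dif_pos hw]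
    congr 1
    simp only [hc0, hφ1 w hw, hw, if_true]
  have hx0c : M⁻¹.mulVec x0 = c0 := by rw [← hMc0, hinv1]
  -- sign analysis
  have hrfacts : ∀ y ∈ F, (∀ k, 0 ≤ M⁻¹.mulVec y k) ∧
      (∀ k, W (e k) ∉ T → M⁻¹.mulVec y k = 0) := by
    intro y hy
    have hks : ∀ k : Fin d, SignType.sign (M⁻¹.mulVec y k) = SignType.sign (c0 k) := by
      intro k
      obtain ⟨s, hs⟩ := hsign Vbar hdetZ hbound k
      have h1 := hs x0 hx0F
      have h2 := hs y hy
      rw [show ((Vbar.map (Int.cast : ℤ → ℝ))⁻¹).mulVec x0 k = c0 k by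
        rw [show Vbar.map (Int.cast : ℤ → ℝ) = M from rfl, hx0c]] at h1
      rw [show Vbar.map (Int.cast : ℤ → ℝ) = M from rfl] at h2
      rw [h2, h1]
    constructor
    · intro k
      exact (sign_aux (hks k) (hc0nonneg k)).1
    · intro k hk
      refine (sign_aux (hks k) (hc0nonneg k)).2 ?_
      simp only [hc0, hk, if_false]
  -- conclusion
  intro y hy
  obtain ⟨hr1, hr2⟩ := hrfacts y hy
  set r : Fin d → ℝ := M⁻¹.mulVec y with hrdef
  refine ⟨fun w => if hw : w ∈ T then r (φ w hw) else 0, ?_, ?_⟩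
  · intro w
    by_cases hw : w ∈ T
    · simp only [dif_pos hw]
      exact hr1 _
    · simp [hw]
  · have hy1 : y = ∑ k, r k • B k := by rw [← hMsum, hrdef, hinv2]
    rw [hy1]
    have h1 : ∑ k, r k • B k = ∑ k ∈ K, r k • B k := by
      symm
      apply Finset.sum_filter_of_ne
      intro k _ hne'
      by_contra hk
      exact hne' (by rw [hr2 k hk, zero_smul])
    rw [h1, hsumKT r]
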